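/- Let S be a Hausdorff pseudocompact primitive topological inverse semigroup, written as the orthogonal sum of a family {B_{λ_i}(G_i)}_{i∈I} of topological Brandt semigroups with zero. Then every non-zero idempotent of S is an isolated point of the set E(S) of idempotents of S, and E(S) is a compact (topological) semilattice. -/

import Mathlib

open Topology

/-- A (Hausdorff) topological space is *pseudocompact* if every locally finite
family of non-empty open subsets is finite. -/
def IsPseudocompact (X : Type*) [TopologicalSpace X] : Prop :=
  ∀ 𝒰 : Set (Set X), (∀ U ∈ 𝒰, IsOpen U ∧ U.Nonempty) →
    LocallyFinite (fun U : 𝒰 => (U : Set X)) → 𝒰.Finite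

/-- `inv` witnesses that the semigroup `S` is an *inverse semigroup*:
for every `x`, `inv x` is the unique `y` with `x*y*x = x` and `y*x*y = y`. -/
structure IsInverseSemigroup (S : Type*) [Mul S] (inv : S → S) : Prop where
  mul_inv_mul : ∀ x : S, x * inv x * x = x
  inv_mul_inv : ∀ x : S, inv x * x * inv x = inv x
  inv_unique : ∀ x y : S, x * y * x = x → y * x * y = y → y = inv x

/-- A semigroup with zero is *primitive* when every non-zero idempotent is
minimal among non-zero idempotents for the natural partial order
`f ≤ e ↔ f*e = e*f = f`. -/
def IsPrimitiveInverse (S : Type*) [Mul S] [Zero S] : Prop :=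
  ∀ e f : S, IsIdempotentElem e → e ≠ 0 → IsIdempotentElem f → f ≠ 0 →
    f * e = f → e * f = f → f = e

/-- The orthogonal sum of the family of Brandt extensions `B_{λ i}(G i)`:
the set `{0} ∪ ⋃ i, (λ i × G i × λ i)`. -/
abbrev OrthSum (I : Type*) (ι : I → Type*) (G : I → Type*) : Type _ :=
  Option (Σ i : I, ι i × G i × ι i)

instance (I : Type*) (ι : I → Type*) (G : I → Type*) : Zero (OrthSum I ι G) :=
  ⟨(none : Option (Σ i : I, ι i × G i × ι i))⟩

/-- The non-zero element `(α, g, β)` of the summand `B_{λ i}(G i)`. -/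
def OrthSum.elem {I : Type*} {ι : I → Type*} {G : I → Type*}
    (i : I) (α : ι i) (g : G i) (β : ι i) : OrthSum I ι G :=
  some ⟨i, (α, g, β)⟩

open Classical in
/-- Multiplication of the orthogonal sum: products are computed inside the
summand `B_{λ i}(G i)` when both factors lie in it, and are `0` otherwise. -/
noncomputable instance (I : Type*) (ι : I → Type*) (G : I → Type*) [∀ i, Mul (G i)] :
    Mul (OrthSum I ι G) :=
  ⟨fun x y =>
    match x, y with
    | some ⟨i, (α, a, β)⟩, some ⟨j, (γ, b, δ)⟩ =>
        if h : i = j then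
          (if cast (congrArg ι h) β = γ then
            (some ⟨j, (cast (congrArg ι h) α, (cast (congrArg G h) a) * b, δ)⟩ :
              Option (Σ i : I, ι i × G i × ι i))
          else none)
        else none
    | _, _ => none⟩

/-- A witness that the semigroup `S` with zero is (isomorphic, as a semigroup
with zero, to) the orthogonal sum of a family of Brandt semigroups
`B_{λ i}(G i)`, `λ i ≥ 1`. -/
structure BrandtDecomposition (S : Type*) [Mul S] [Zero S] where
  I : Type*
  ι : I → Type*
  G : I → Type*
  [instNonempty : ∀ i, Nonempty (ι i)]
  [instGroup : ∀ i, Group (G i)]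
  e : S ≃ OrthSum I ι G
  map_mul : ∀ x y : S, e (x * y) = e x * e y
  map_zero : e 0 = 0

section OrthSumLemmas
variable {I : Type*} {ι : I → Type*} {G : I → Type*} [∀ i, Mul (G i)]

open Classical in
lemma OrthSum.mul_def (i j : I) (α : ι i) (a : G i) (β : ι i) (γ : ι j) (b : G j) (δ : ι j) :
    (OrthSum.elem i α a β) * (OrthSum.elem j γ b δ) =
      if h : i = j then
        (if cast (congrArg ι h) β = γ then
          (some ⟨j, (cast (congrArg ι h) α, (cast (congrArg G h) a) * b, δ)⟩ :
            Option (Σ i : I, ι i × G i × ι i))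
        else none)
      else none := rfl

lemma OrthSum.zero_mul' (x : OrthSum I ι G) : 0 * x = 0 := rfl

lemma OrthSum.mul_zero' (x : OrthSum I ι G) : x * 0 = 0 := by
  rcases x with _ | ⟨i, α, a, β⟩ <;> rfl

lemma OrthSum.mul_same_pos (i : I) (α : ι i) (a : G i) (β γ : ι i) (b : G i) (δ : ι i)
    (h : β = γ) : OrthSum.elem i α a β * OrthSum.elem i γ b δ = OrthSum.elem i α (a * b) δ := by
  rw [OrthSum.mul_def, dif_pos rfl]
  simp [h, OrthSum.elem]

lemma OrthSum.mul_same_neg (i : I) (α : ι i) (a : G i) (β γ : ι i) (b : G i) (δ : ι i)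
    (h : β ≠ γ) : OrthSum.elem i α a β * OrthSum.elem i γ b δ = 0 := by
  rw [OrthSum.mul_def, dif_pos rfl]
  simp [h]
  rfl

lemma OrthSum.mul_diff (i j : I) (α : ι i) (a : G i) (β : ι i) (γ : ι j) (b : G j) (δ : ι j)
    (h : i ≠ j) : OrthSum.elem i α a β * OrthSum.elem j γ b δ = 0 := by
  rw [OrthSum.mul_def, dif_neg h]; rfl

end OrthSumLemmas

section OrthSumIdem
variable {I : Type*} {ι : I → Type*} {G : I → Type*} [∀ i, Group (G i)]

lemma OrthSum.elem_ne_zero (i : I) (α : ι i) (a : G i) (β : ι i) :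
    OrthSum.elem i α a β ≠ 0 := fun h => Option.some_ne_none _ h

/-- Characterization of non-zero idempotents of the orthogonal sum. -/
lemma OrthSum.idem_struct (x : OrthSum I ι G) (hx : x * x = x) (hx0 : x ≠ 0) :
    ∃ (i : I) (α : ι i), x = OrthSum.elem i α 1 α := by
  rcases x with _ | ⟨i, α, a, β⟩
  · exact absurd rfl hx0
  · change OrthSum.elem i α a β * OrthSum.elem i α a β = OrthSum.elem i α a β at hx
    by_cases hβα : β = α
    · subst hβα
      rw [OrthSum.mul_same_pos i β a β β a β rfl] at hx
      have : a * a = a := by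
        simpa [OrthSum.elem] using hx
      have ha : a = 1 := mul_eq_left.mp this
      exact ⟨i, β, by rw [ha]; rfl⟩
    · rw [OrthSum.mul_same_neg i α a β α a β hβα] at hx
      exact absurd hx.symm (OrthSum.elem_ne_zero i α a β)

/-- Products of idempotents in the orthogonal sum: they commute, the product is
idempotent, and distinct non-zero idempotents multiply to zero. -/
lemma OrthSum.idem_mul (x y : OrthSum I ι G) (hx : x * x = x) (hy : y * y = y) :
    x * y = y * x ∧ (x * y) * (x * y) = x * y ∧ (x ≠ y → x * y = 0) := by
  rcases eq_or_ne x 0 with rfl | hx0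
  · simp [OrthSum.zero_mul', OrthSum.mul_zero']
  rcases eq_or_ne y 0 with rfl | hy0
  · simp [OrthSum.zero_mul', OrthSum.mul_zero']
  obtain ⟨i, α, rfl⟩ := OrthSum.idem_struct x hx hx0
  obtain ⟨j, β, rfl⟩ := OrthSum.idem_struct y hy hy0
  by_cases hij : i = j
  · subst hij
    by_cases hαβ : α = β
    · subst hαβ
      rw [OrthSum.mul_same_pos i α 1 α α 1 α rfl, one_mul]
      exact ⟨rfl, hx, fun h => absurd rfl h⟩
    · rw [OrthSum.mul_same_neg i α 1 α β 1 β hαβ,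
        OrthSum.mul_same_neg i β 1 β α 1 α (Ne.symm hαβ)]
      exact ⟨rfl, OrthSum.zero_mul' 0, fun _ => rfl⟩
  · rw [OrthSum.mul_diff i j α 1 α β 1 β hij,
      OrthSum.mul_diff j i β 1 β α 1 α (Ne.symm hij)]
    exact ⟨rfl, OrthSum.zero_mul' 0, fun _ => rfl⟩

end OrthSumIdem
/-- Let `S` be a Hausdorff pseudocompact primitive topological
inverse semigroup, written as the orthogonal sum of a family of topological
Brandt semigroups with zero. Then every non-zero idempotent of `S` is an
isolated point of the set `E(S)` of idempotents, and `E(S)` is a compact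
(topological) semilattice. -/

theorem idempotents_isolated_and_compact_of_pseudocompact_primitive
    {S : Type*} [SemigroupWithZero S] [TopologicalSpace S] [T2Space S]
    (continuous_mul : Continuous fun p : S × S => p.1 * p.2)
    (inv : S → S) (hinv : IsInverseSemigroup S inv) (hinvc : Continuous inv)
    (hnt : Nontrivial S) (hprim : IsPrimitiveInverse S)
    (hpc : IsPseudocompact S)
    (hdecomp : BrandtDecomposition S) :
    (∀ e : S, IsIdempotentElem e → e ≠ 0 →
        ∃ V : Set S, IsOpen V ∧ V ∩ {x : S | IsIdempotentElem x} = {e}) ∧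
      IsCompact {x : S | IsIdempotentElem x} ∧
      (∀ e f : S, IsIdempotentElem e → IsIdempotentElem f →
        e * f = f * e ∧ IsIdempotentElem (e * f)) := by
  classical
  letI := hdecomp.instGroup
  letI := hdecomp.instNonempty
  let eS := hdecomp.e
  have einj : Function.Injective eS := eS.injective
  have himg : ∀ x : S, IsIdempotentElem x → eS x * eS x = eS x := fun x hx => by
    rw [← hdecomp.map_mul, hx]
  -- key algebraic facts about idempotents in `S`
  have key : ∀ a b : S, IsIdempotentElem a → IsIdempotentElem b →
      a * b = b * a ∧ IsIdempotentElem (a * b) ∧ (a ≠ b → a * b = 0) := by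
    intro a b ha hb
    obtain ⟨hc, hi, hz⟩ := OrthSum.idem_mul (eS a) (eS b) (himg a ha) (himg b hb)
    refine ⟨einj ?_, einj ?_, fun hne => einj ?_⟩
    · rw [hdecomp.map_mul, hdecomp.map_mul, hc]
    · rw [hdecomp.map_mul, hdecomp.map_mul]
      exact hi
    · rw [hdecomp.map_mul, hdecomp.map_zero]
      exact hz (fun h => hne (einj h))
  -- the continuous idempotent-valued map `q`
  set q : S → S := fun x => x * inv x with hqdef
  have hqc : Continuous q := continuous_mul.comp (continuous_id.prodMk hinvc)
  have hq_idem : ∀ x, IsIdempotentElem (q x) := by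
    intro x
    show (x * inv x) * (x * inv x) = x * inv x
    rw [← mul_assoc, hinv.mul_inv_mul]
  have hq_fix : ∀ a : S, IsIdempotentElem a → q a = a := by
    intro a ha
    have h1 : inv a = a := (hinv.inv_unique a a (by rw [ha, ha]) (by rw [ha, ha])).symm
    show a * inv a = a
    rw [h1, ha]
  -- isolation of non-zero idempotents
  have hiso : ∀ a : S, IsIdempotentElem a → a ≠ 0 →
      ∃ V : Set S, IsOpen V ∧ V ∩ {x : S | IsIdempotentElem x} = {a} := by
    intro a ha ha0
    have hcont : Continuous fun x : S => a * x * a := by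
      have h1 : Continuous fun x : S => a * x :=
        continuous_mul.comp (continuous_const.prodMk continuous_id)
      exact continuous_mul.comp (h1.prodMk continuous_const)
    refine ⟨(fun x : S => a * x * a) ⁻¹' {(0:S)}ᶜ, isOpen_compl_singleton.preimage hcont, ?_⟩
    ext f
    simp only [Set.mem_inter_iff, Set.mem_preimage, Set.mem_compl_iff, Set.mem_singleton_iff,
      Set.mem_setOf_eq]
    constructor
    · rintro ⟨hfV, hfE⟩
      by_contra hne
      rcases eq_or_ne f 0 with rfl | hf0
      · exact hfV (by rw [mul_zero, zero_mul])
      · have haf : a * f = 0 := (key a f ha hfE).2.2 (Ne.symm hne)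
        exact hfV (by rw [haf, zero_mul])
    · rintro rfl
      refine ⟨?_, ha⟩
      rw [ha, ha]
      exact ha0
  -- only finitely many idempotents outside any open neighbourhood of 0
  have hfin : ∀ U : Set S, IsOpen U → (0:S) ∈ U →
      {x : S | IsIdempotentElem x ∧ x ∉ U}.Finite := by
    intro U hU h0U
    by_contra hinf
    set D := {x : S | IsIdempotentElem x ∧ x ∉ U} with hD
    have hiso' : ∀ a : S, ∃ V : Set S, IsIdempotentElem a → a ≠ 0 →
        IsOpen V ∧ V ∩ {x : S | IsIdempotentElem x} = {a} := by
      intro a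
      by_cases h : IsIdempotentElem a ∧ a ≠ 0
      · obtain ⟨V, hV1, hV2⟩ := hiso a h.1 h.2
        exact ⟨V, fun _ _ => ⟨hV1, hV2⟩⟩
      · exact ⟨∅, fun h1 h2 => absurd ⟨h1, h2⟩ h⟩
    choose V hV using hiso'
    set N : S → Set S := fun a => q ⁻¹' (V a) with hN
    have hD0 : ∀ a ∈ D, a ≠ 0 := fun a haD h => haD.2 (h ▸ h0U)
    have hmemV : ∀ a : S, IsIdempotentElem a → a ≠ 0 → a ∈ V a := by
      intro a h1 h2
      have := (hV a h1 h2).2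
      have : a ∈ V a ∩ {x : S | IsIdempotentElem x} := by rw [this]; rfl
      exact this.1
    have hNopen : ∀ a : S, IsIdempotentElem a → a ≠ 0 → IsOpen (N a) :=
      fun a h1 h2 => (hV a h1 h2).1.preimage hqc
    have hNmem : ∀ a : S, IsIdempotentElem a → a ≠ 0 → a ∈ N a := by
      intro a h1 h2
      show q a ∈ V a
      rw [hq_fix a h1]
      exact hmemV a h1 h2
    have hNq : ∀ a : S, IsIdempotentElem a → a ≠ 0 → ∀ y ∈ N a, q y = a := by
      intro a h1 h2 y hy
      have : q y ∈ V a ∩ {x : S | IsIdempotentElem x} := ⟨hy, hq_idem y⟩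
      rw [(hV a h1 h2).2] at this
      exact this
    set 𝒰 : Set (Set S) := N '' D with h𝒰
    have h1 : ∀ W ∈ 𝒰, IsOpen W ∧ W.Nonempty := by
      rintro W ⟨a, haD, rfl⟩
      exact ⟨hNopen a haD.1 (hD0 a haD), ⟨a, hNmem a haD.1 (hD0 a haD)⟩⟩
    have hlf : LocallyFinite (fun W : 𝒰 => (W : Set S)) := by
      intro x
      by_cases hx : q x ∈ U
      · refine ⟨q ⁻¹' U, (hU.preimage hqc).mem_nhds hx, ?_⟩
        refine Set.Finite.subset Set.finite_empty ?_
        rintro ⟨W, a, haD, rfl⟩ ⟨y, hy1, hy2⟩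
        have hqy : q y = a := hNq a haD.1 (hD0 a haD) y hy1
        exact haD.2 (hqy ▸ hy2)
      · have hq0 : q x ≠ 0 := fun h => hx (h ▸ h0U)
        have hqi := hq_idem x
        refine ⟨q ⁻¹' (V (q x)), ((hV _ hqi hq0).1.preimage hqc).mem_nhds
          (hmemV _ hqi hq0), ?_⟩
        have hDqx : q x ∈ D := ⟨hqi, hx⟩
        refine Set.Finite.subset (Set.finite_singleton
          (⟨N (q x), ⟨q x, hDqx, rfl⟩⟩ : 𝒰)) ?_
        rintro ⟨W, a, haD, rfl⟩ ⟨y, hy1, hy2⟩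
        have hqy : q y = a := hNq a haD.1 (hD0 a haD) y hy1
        have : q y ∈ V (q x) ∩ {x : S | IsIdempotentElem x} := ⟨hy2, hq_idem y⟩
        rw [(hV _ hqi hq0).2] at this
        have haq : a = q x := by rw [← hqy]; exact this
        simp only [Set.mem_singleton_iff, Subtype.mk.injEq]
        exact Subtype.ext (congrArg N haq)
    have hUfin := hpc 𝒰 h1 hlf
    have hNinj : Set.InjOn N D := by
      intro a haD b hbD h
      have hmem : a ∈ N b := h ▸ hNmem a haD.1 (hD0 a haD)
      have := hNq b hbD.1 (hD0 b hbD) a hmem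
      rw [hq_fix a haD.1] at this
      exact this
    exact hinf (Set.Finite.of_finite_image hUfin hNinj)
  refine ⟨hiso, ?_, fun a b ha hb => ⟨(key a b ha hb).1, (key a b ha hb).2.1⟩⟩
  -- compactness of the set of idempotents
  apply isCompact_of_finite_subcover
  intro κ U hUo hcover
  have h0E : (0:S) ∈ {x : S | IsIdempotentElem x} := mul_zero 0
  obtain ⟨i0, hi0⟩ : ∃ i, (0:S) ∈ U i := by simpa using hcover h0E
  have hDfin := hfin (U i0) (hUo i0) hi0
  have hsel : ∀ d : S, ∃ i, (IsIdempotentElem d ∧ d ∉ U i0) → d ∈ U i := by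
    intro d
    by_cases h : IsIdempotentElem d
    · obtain ⟨i, hi⟩ := Set.mem_iUnion.mp (hcover h)
      exact ⟨i, fun _ => hi⟩
    · exact ⟨i0, fun hd => absurd hd.1 h⟩
  choose f hfmem using hsel
  refine ⟨insert i0 (hDfin.toFinset.image f), ?_⟩
  intro x hx
  simp only [Set.mem_iUnion]
  by_cases hxU : x ∈ U i0
  · exact ⟨i0, Finset.mem_insert_self _ _, hxU⟩
  · have hxD : x ∈ {x : S | IsIdempotentElem x ∧ x ∉ U i0} := ⟨hx, hxU⟩
    exact ⟨f x, Finset.mem_insert_of_mem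
      (Finset.mem_image_of_mem f (hDfin.mem_toFinset.mpr hxD)), hfmem x hxD⟩
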